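/- arXiv:1412.6734 — 3 statements merged into one kernel-verified Lean document; each statement's English description precedes it below -/
import Mathlib

section
/- Let k ≥ 2, α ∈ ℝ, and e, d ∈ ℝ^k, and set X = e dᵀ and M = (I − αX)(I − αX)ᵀ. Define λ⁺, λ⁻ = 1 + (α²‖e‖²‖d‖² − 2α⟨e,d⟩ ± α‖e‖‖d‖·√(α²‖e‖²‖d‖² + 4 − 4α⟨e,d⟩))/2 (the square root is real since α²‖e‖²‖d‖² + 4 − 4α⟨e,d⟩ ≥ 0). Then the characteristic polynomial of M equals (Y − 1)^{k−2} (Y − λ⁺)(Y − λ⁻); in particular M has k−2 eigenvalues equal to 1 and its remaining two eigenvalues are λ⁺ and λ⁻. -/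
open Matrix Polynomial

/-- The Euclidean norm of a vector in `ℝ^k`, `‖v‖ = √⟨v,v⟩`. -/
noncomputable def vecEnorm {k : ℕ} (v : Fin k → ℝ) : ℝ := Real.sqrt (v ⬝ᵥ v)

lemma my_eval_charpoly {n : ℕ} (M : Matrix (Fin n) (Fin n) ℝ) (y : ℝ) :
    M.charpoly.eval y = (y • (1 : Matrix (Fin n) (Fin n) ℝ) - M).det := by
  rw [Matrix.charpoly, ← Polynomial.coe_evalRingHom, RingHom.map_det]
  congr 1
  ext i j
  by_cases h : i = j <;>
    simp [h, Matrix.charmatrix_apply, Matrix.one_apply, Matrix.smul_apply, Matrix.diagonal]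

theorem charpoly_td_lambda (k : ℕ) (hk : 2 ≤ k) (α : ℝ) (e d : Fin k → ℝ)
    (Xm M : Matrix (Fin k) (Fin k) ℝ)
    (hX : Xm = Matrix.vecMulVec e d)
    (hM : M = (1 - α • Xm) * (1 - α • Xm)ᵀ)
    (lp lm : ℝ)
    (hlp : lp = 1 + (α ^ 2 * vecEnorm e ^ 2 * vecEnorm d ^ 2 - 2 * α * (e ⬝ᵥ d) +
        α * vecEnorm e * vecEnorm d *
          Real.sqrt (α ^ 2 * vecEnorm e ^ 2 * vecEnorm d ^ 2 + 4 - 4 * α * (e ⬝ᵥ d))) / 2)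
    (hlm : lm = 1 + (α ^ 2 * vecEnorm e ^ 2 * vecEnorm d ^ 2 - 2 * α * (e ⬝ᵥ d) -
        α * vecEnorm e * vecEnorm d *
          Real.sqrt (α ^ 2 * vecEnorm e ^ 2 * vecEnorm d ^ 2 + 4 - 4 * α * (e ⬝ᵥ d))) / 2) :
    M.charpoly = (X - 1) ^ (k - 2) * ((X - C lp) * (X - C lm)) := by
  set E : ℝ := e ⬝ᵥ e with hE
  set D : ℝ := d ⬝ᵥ d with hD
  set p : ℝ := e ⬝ᵥ d with hp
  have hEnn : 0 ≤ E := Finset.sum_nonneg fun i _ => mul_self_nonneg _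
  have hDnn : 0 ≤ D := Finset.sum_nonneg fun i _ => mul_self_nonneg _
  have hqE : vecEnorm e ^ 2 = E := Real.sq_sqrt hEnn
  have hqD : vecEnorm d ^ 2 = D := Real.sq_sqrt hDnn
  have hCS : p ^ 2 ≤ E * D := by
    simpa [hE, hD, hp, dotProduct, sq] using
      Finset.sum_mul_sq_le_sq_mul_sq Finset.univ e d
  have hRnn : 0 ≤ α ^ 2 * E * D + 4 - 4 * α * p := by
    nlinarith [sq_nonneg (α * p - 2), sq_nonneg α]
  have hs2 : Real.sqrt (α ^ 2 * E * D + 4 - 4 * α * p) ^ 2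
      = α ^ 2 * E * D + 4 - 4 * α * p := Real.sq_sqrt hRnn
  set s : ℝ := Real.sqrt (α ^ 2 * E * D + 4 - 4 * α * p) with hsdef
  rw [hqE, hqD] at hlp hlm
  -- the rank-two decomposition
  set A : Matrix (Fin k) (Fin 2) ℝ :=
    Matrix.of (fun i t => if t = 0 then e i else d i) with hA
  set B : Matrix (Fin 2) (Fin k) ℝ :=
    Matrix.of (fun t j => if t = 0 then α ^ 2 * D * e j - α * d j else -(α * e j)) with hB
  have hD' : D = ∑ l, d l * d l := hD
  have hE' : (∑ j, e j * e j) = E := hE.symm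
  have hed : (∑ j, e j * d j) = p := hp.symm
  have hde : (∑ j, d j * e j) = p := by
    rw [← hed]; exact Finset.sum_congr rfl fun _ _ => mul_comm _ _
  have hdd : (∑ j, d j * d j) = D := hD.symm
  have hMAB : M = 1 + A * B := by
    subst hM hX
    ext i j
    simp only [Matrix.mul_apply, Matrix.add_apply, Matrix.sub_apply, Matrix.one_apply,
      Matrix.transpose_apply, Matrix.smul_apply, Matrix.vecMulVec_apply, smul_eq_mul,
      hA, hB, Matrix.of_apply, Fin.sum_univ_two]
    simp only [if_true, Fin.one_eq_zero_iff, OfNat.ofNat_ne_one, if_false]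
    rw [Finset.sum_congr rfl (fun l _ => by ring_nf :
      ∀ l ∈ Finset.univ, ((if i = l then (1:ℝ) else 0) - α * (e i * d l)) *
          ((if j = l then (1:ℝ) else 0) - α * (e j * d l)) =
        (if i = l then (1:ℝ) else 0) * (if j = l then (1:ℝ) else 0)
          - α * e i * ((if j = l then (1:ℝ) else 0) * d l)
          - α * e j * ((if i = l then (1:ℝ) else 0) * d l)
          + α ^ 2 * (e i * e j) * (d l * d l))]
    simp only [Finset.sum_add_distrib, Finset.sum_sub_distrib, ← Finset.mul_sum, ite_mul,
      mul_ite, one_mul, zero_mul, mul_one, mul_zero, Finset.sum_ite_eq, Finset.mem_univ,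
      if_true, ← hD']
    by_cases h : i = j <;> simp [h] <;> ring
  -- entries of B * A
  have sum_split : ∀ (a b : ℝ) (f g h : Fin k → ℝ),
      ∑ j, (a * f j + b * g j) * h j = a * (∑ j, f j * h j) + b * (∑ j, g j * h j) := by
    intro a b f g h
    rw [Finset.mul_sum, Finset.mul_sum, ← Finset.sum_add_distrib]
    exact Finset.sum_congr rfl fun _ _ => by ring
  have h00 : (B * A) 0 0 = α ^ 2 * D * E - α * p := by
    have : (B * A) 0 0 = ∑ j, (α ^ 2 * D * e j + (-α) * d j) * e j := by
      rw [Matrix.mul_apply]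
      refine Finset.sum_congr rfl fun j _ => ?_
      simp only [hA, hB, Matrix.of_apply, Fin.isValue, if_pos rfl, ite_true, ite_false,
        if_neg (by decide : (1 : Fin 2) ≠ 0)]
      ring
    rw [this, sum_split, hE', hde]; ring
  have h01 : (B * A) 0 1 = α ^ 2 * D * p - α * D := by
    have : (B * A) 0 1 = ∑ j, (α ^ 2 * D * e j + (-α) * d j) * d j := by
      rw [Matrix.mul_apply]
      refine Finset.sum_congr rfl fun j _ => ?_
      simp only [hA, hB, Matrix.of_apply, Fin.isValue, if_pos rfl, ite_true, ite_false,
        if_neg (by decide : (1 : Fin 2) ≠ 0)]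
      ring
    rw [this, sum_split, hed, hdd]; ring
  have h10 : (B * A) 1 0 = -(α * E) := by
    have : (B * A) 1 0 = ∑ j, ((-α) * e j + 0 * e j) * e j := by
      rw [Matrix.mul_apply]
      refine Finset.sum_congr rfl fun j _ => ?_
      simp only [hA, hB, Matrix.of_apply, Fin.isValue, if_pos rfl, ite_true, ite_false,
        if_neg (by decide : (1 : Fin 2) ≠ 0)]
      ring
    rw [this, sum_split, hE']; ring
  have h11 : (B * A) 1 1 = -(α * p) := by
    have : (B * A) 1 1 = ∑ j, ((-α) * e j + 0 * e j) * d j := by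
      rw [Matrix.mul_apply]
      refine Finset.sum_congr rfl fun j _ => ?_
      simp only [hA, hB, Matrix.of_apply, Fin.isValue, if_pos rfl, ite_true, ite_false,
        if_neg (by decide : (1 : Fin 2) ≠ 0)]
      ring
    rw [this, sum_split, hed]; ring
  -- evaluate both sides at every y ≠ 1
  apply Polynomial.eq_of_infinite_eval_eq
  apply Set.Infinite.mono (s := {(1:ℝ)}ᶜ) ?_ ((Set.finite_singleton (1:ℝ)).infinite_compl)
  intro y hy
  simp only [Set.mem_compl_iff, Set.mem_singleton_iff] at hy
  simp only [Set.mem_setOf_eq]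
  have hy1 : y - 1 ≠ 0 := sub_ne_zero.mpr hy
  set c : ℝ := y - 1 with hc
  rw [my_eval_charpoly]
  have h1 : y • (1 : Matrix (Fin k) (Fin k) ℝ) - M = c • 1 - A * B := by
    rw [hMAB, hc, sub_smul, one_smul]; abel
  have h2 : c • (1 : Matrix (Fin k) (Fin k) ℝ) - A * B = c • (1 - A * (c⁻¹ • B)) := by
    rw [smul_sub, Matrix.mul_smul, smul_smul, mul_inv_cancel₀ hy1, one_smul]
  have h3 : (1 : Matrix (Fin 2) (Fin 2) ℝ) - (c⁻¹ • B) * A = c⁻¹ • (c • 1 - B * A) := by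
    rw [Matrix.smul_mul, smul_sub, smul_smul, inv_mul_cancel₀ hy1, one_smul]
  rw [h1, h2, Matrix.det_smul, Matrix.det_one_sub_mul_comm, h3, Matrix.det_smul]
  have hQ : (c • 1 - B * A).det = c ^ 2 - (α ^ 2 * D * E - 2 * α * p) * c
      + α ^ 2 * (p ^ 2 - E * D) := by
    rw [Matrix.det_fin_two]
    simp only [Matrix.sub_apply, Matrix.smul_apply, Matrix.one_apply, smul_eq_mul, h00, h01,
      h10, h11]
    norm_num
    ring
  rw [hQ]
  simp only [Fintype.card_fin]
  simp only [eval_mul, eval_pow, eval_sub, eval_one, eval_X, eval_C, hlp, hlm, ← hc]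
  have key : c ^ 2 - (α ^ 2 * D * E - 2 * α * p) * c + α ^ 2 * (p ^ 2 - E * D)
      = (y - (1 + (α ^ 2 * E * D - 2 * α * p + α * vecEnorm e * vecEnorm d * s) / 2)) *
        (y - (1 + (α ^ 2 * E * D - 2 * α * p - α * vecEnorm e * vecEnorm d * s) / 2)) := by
    rw [hc]
    linear_combination (α ^ 2 / 4) * ((vecEnorm d) ^ 2 * s ^ 2 * hqE + E * s ^ 2 * hqD
      + E * D * hs2)
  have hck2 : c ^ k = c ^ (k - 2) * c ^ 2 := by rw [← pow_add]; congr 1; omega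
  rw [key, hck2]
  rw [← hsdef]
  field_simp
end

section
/- Let α ≥ 0, γ, λ, r ∈ ℝ and w, e, e₋, φ' ∈ ℝ^k. Define w' = (I − (α/(1 + α‖e‖²)) e eᵀ)·(w + α(r + γ⟨φ', w⟩ + γλ⟨e₋, w⟩) e). Then w' satisfies the implicit TD(λ) equation w' = w + α (r + γ⟨φ', w⟩ + γλ⟨e₋, w⟩ − ⟨e, w'⟩) e. -/
open Matrix

/-- The Euclidean norm of a vector in `ℝ^k`, `‖v‖ = √⟨v,v⟩`. -/
noncomputable def euclidNorm {k : ℕ} (v : Fin k → ℝ) : ℝ := Real.sqrt (v ⬝ᵥ v)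

lemma vecMulVec_mulVec' {k : ℕ} (u v x : Fin k → ℝ) :
    (Matrix.vecMulVec u v).mulVec x = (v ⬝ᵥ x) • u := by
  ext i
  simp [Matrix.vecMulVec, Matrix.mulVec, dotProduct, Finset.mul_sum, mul_comm,
    mul_left_comm]

theorem implicit_td_update_solves_implicit_equation (k : ℕ) (α : ℝ) (hα : 0 ≤ α)
    (γ lam r : ℝ) (w e em φ' : Fin k → ℝ) (w' : Fin k → ℝ)
    (hw' : w' =
      ((1 : Matrix (Fin k) (Fin k) ℝ) -
          (α / (1 + α * euclidNorm e ^ 2)) • Matrix.vecMulVec e e).mulVec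
        (w + (α * (r + γ * (φ' ⬝ᵥ w) + γ * lam * (em ⬝ᵥ w))) • e)) :
    w' = w + (α * (r + γ * (φ' ⬝ᵥ w) + γ * lam * (em ⬝ᵥ w) - e ⬝ᵥ w')) • e := by
  set s : ℝ := e ⬝ᵥ e with hs
  have hse : euclidNorm e ^ 2 = s := by
    rw [euclidNorm, Real.sq_sqrt]
    exact Finset.sum_nonneg fun i _ => mul_self_nonneg _
  have hs0 : 0 ≤ s := Finset.sum_nonneg fun i _ => mul_self_nonneg _
  have hden : (1 : ℝ) + α * s ≠ 0 := by positivity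
  set c : ℝ := α * (r + γ * (φ' ⬝ᵥ w) + γ * lam * (em ⬝ᵥ w)) with hc
  set u : Fin k → ℝ := w + c • e with hu
  set d : ℝ := α / (1 + α * s) with hd
  have hw'2 : w' = u - (d * (e ⬝ᵥ u)) • e := by
    rw [hw', hse, Matrix.sub_mulVec, Matrix.one_mulVec, Matrix.smul_mulVec,
      vecMulVec_mulVec', smul_smul]
  have hdot : e ⬝ᵥ w' = (e ⬝ᵥ u) - d * (e ⬝ᵥ u) * s := by
    rw [hw'2, dotProduct_sub, dotProduct_smul, smul_eq_mul, mul_assoc]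
  have hd' : α * (1 - d * s) = d := by
    rw [hd]; field_simp; ring
  clear_value u d c s
  have key : c - α * (e ⬝ᵥ w') = c - d * (e ⬝ᵥ u) := by
    linear_combination (-α) * hdot - (e ⬝ᵥ u) * hd'
  calc w' = u - (d * (e ⬝ᵥ u)) • e := hw'2
    _ = w + (c - d * (e ⬝ᵥ u)) • e := by rw [hu, sub_smul]; abel
    _ = w + (c - α * (e ⬝ᵥ w')) • e := by rw [key]
    _ = w + (α * (r + γ * (φ' ⬝ᵥ w) + γ * lam * (em ⬝ᵥ w) - e ⬝ᵥ w')) • e := by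
        rw [mul_sub, ← hc]
end

section
/- Let k ≥ 2, α ≥ 0, and e, d ∈ ℝ^k. Set Q = (I + α e eᵀ)⁻¹, X = e dᵀ, β = 1 − α‖e‖²/(1 + α‖e‖²), and M' = (I − α Q X)(I − α Q X)ᵀ. Define λ^{im,+}, λ^{im,−} = 1 + (α²β²‖e‖²‖d‖² − 2αβ⟨e,d⟩ ± αβ‖e‖‖d‖·√(α²β²‖e‖²‖d‖² + 4 − 4αβ⟨e,d⟩))/2. Then the characteristic polynomial of M' equals (Y − 1)^{k−2} (Y − λ^{im,+})(Y − λ^{im,−}); in particular M' has k−2 eigenvalues equal to 1 and its remaining two eigenvalues are λ^{im,+} and λ^{im,−}. -/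
open Matrix Polynomial

/-- The Euclidean norm of a vector in `ℝ^k`, `‖v‖ = √⟨v,v⟩`. -/
noncomputable def enorm {k : ℕ} (v : Fin k → ℝ) : ℝ := Real.sqrt (v ⬝ᵥ v)

lemma dot_self_nonneg {k : ℕ} (v : Fin k → ℝ) : 0 ≤ v ⬝ᵥ v :=
  Finset.sum_nonneg fun _ _ => mul_self_nonneg _

lemma enorm_sq {k : ℕ} (v : Fin k → ℝ) : _root_.enorm v ^ 2 = v ⬝ᵥ v :=
  Real.sq_sqrt (dot_self_nonneg v)

lemma enorm_nonneg' {k : ℕ} (v : Fin k → ℝ) : 0 ≤ _root_.enorm v := Real.sqrt_nonneg _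

lemma vmv_mul_vmv {k : ℕ} (u v w x : Fin k → ℝ) :
    vecMulVec u v * vecMulVec w x = (v ⬝ᵥ w) • vecMulVec u x := by
  ext i j
  simp only [Matrix.mul_apply, vecMulVec_apply, Matrix.smul_apply, smul_eq_mul, dotProduct,
    Finset.sum_mul]
  apply Finset.sum_congr rfl
  intro l _
  ring

lemma eval_charpoly' {k : ℕ} (M : Matrix (Fin k) (Fin k) ℝ) (y : ℝ) :
    M.charpoly.eval y = (y • (1 : Matrix (Fin k) (Fin k) ℝ) - M).det := by
  rw [Matrix.charpoly, ← coe_evalRingHom, RingHom.map_det]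
  congr 1
  ext i j
  by_cases h : i = j
  · subst h; simp [charmatrix_apply_eq]
  · simp [charmatrix_apply_ne _ _ _ h, Matrix.one_apply_ne h]

lemma transpose_vmv {k : ℕ} (u v : Fin k → ℝ) : (vecMulVec u v)ᵀ = vecMulVec v u := by
  ext i j; simp [vecMulVec_apply, mul_comm]

set_option maxHeartbeats 1000000 in
theorem charpoly_implicit_td_lambda (k : ℕ) (hk : 2 ≤ k) (α : ℝ) (hα : 0 ≤ α)
    (e d : Fin k → ℝ)
    (Q Xm M' : Matrix (Fin k) (Fin k) ℝ)
    (hQ : Q = ((1 : Matrix (Fin k) (Fin k) ℝ) + α • Matrix.vecMulVec e e)⁻¹)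
    (hX : Xm = Matrix.vecMulVec e d)
    (hM' : M' = (1 - α • (Q * Xm)) * (1 - α • (Q * Xm))ᵀ)
    (β : ℝ) (hβ : β = 1 - α * _root_.enorm e ^ 2 / (1 + α * _root_.enorm e ^ 2))
    (lp lm : ℝ)
    (hlp : lp = 1 + (α ^ 2 * β ^ 2 * _root_.enorm e ^ 2 * _root_.enorm d ^ 2 - 2 * α * β * (e ⬝ᵥ d) +
        α * β * _root_.enorm e * _root_.enorm d *
          Real.sqrt (α ^ 2 * β ^ 2 * _root_.enorm e ^ 2 * _root_.enorm d ^ 2 + 4 - 4 * α * β * (e ⬝ᵥ d))) / 2)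
    (hlm : lm = 1 + (α ^ 2 * β ^ 2 * _root_.enorm e ^ 2 * _root_.enorm d ^ 2 - 2 * α * β * (e ⬝ᵥ d) -
        α * β * _root_.enorm e * _root_.enorm d *
          Real.sqrt (α ^ 2 * β ^ 2 * _root_.enorm e ^ 2 * _root_.enorm d ^ 2 + 4 - 4 * α * β * (e ⬝ᵥ d))) / 2) :
    M'.charpoly = (X - 1) ^ (k - 2) * ((X - C lp) * (X - C lm)) := by
  set a := e ⬝ᵥ e with ha
  set b := d ⬝ᵥ d with hb
  set t := e ⬝ᵥ d with ht
  set p := _root_.enorm e with hp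
  set q := _root_.enorm d with hq
  have ha0 : 0 ≤ a := dot_self_nonneg e
  have hb0 : 0 ≤ b := dot_self_nonneg d
  have hp2 : p ^ 2 = a := enorm_sq e
  have hq2 : q ^ 2 = b := enorm_sq d
  have hp0 : 0 ≤ p := enorm_nonneg' e
  have hq0 : 0 ≤ q := enorm_nonneg' d
  have hden : (0:ℝ) < 1 + α * a := by nlinarith
  have hβ1 : β * (1 + α * a) = 1 := by
    rw [hβ, hp2]; field_simp; ring
  have hβpos : 0 < β := by nlinarith
  have hc0 : 0 ≤ α * β := mul_nonneg hα hβpos.le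
  -- Q
  have hQval : Q = 1 - (α * β) • vecMulVec e e := by
    rw [hQ]
    apply Matrix.inv_eq_right_inv
    have expand : ((1:Matrix (Fin k) (Fin k) ℝ) + α • vecMulVec e e) *
        (1 - (α * β) • vecMulVec e e)
        = 1 + (α - α * β - α * (α * β * a)) • vecMulVec e e := by
      rw [Matrix.add_mul, Matrix.mul_sub, Matrix.mul_sub]
      simp only [Matrix.one_mul, Matrix.mul_one, Matrix.mul_smul, Matrix.smul_mul,
        vmv_mul_vmv, ← ha]
      module
    rw [expand, show α - α * β - α * (α * β * a) = 0 by linear_combination (-α) * hβ1,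
      zero_smul, add_zero]
  have hQX : α • (Q * Xm) = (α * β) • vecMulVec e d := by
    rw [hQval, hX, Matrix.sub_mul, Matrix.one_mul, Matrix.smul_mul, vmv_mul_vmv, ← ha]
    rw [smul_sub, smul_smul, smul_smul, ← sub_smul]
    rw [show α - α * (α * β) * a = α * β by linear_combination (-α) * hβ1]
  rw [hQX] at hM'
  have hM'2 : M' = 1 - (α*β) • vecMulVec d e - (α*β) • vecMulVec e d
      + ((α*β)^2*b) • vecMulVec e e := by
    rw [hM', Matrix.transpose_sub, Matrix.transpose_one, Matrix.transpose_smul, transpose_vmv]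
    simp only [Matrix.sub_mul, Matrix.mul_sub, Matrix.one_mul, Matrix.mul_one,
      Matrix.mul_smul, Matrix.smul_mul, vmv_mul_vmv, ← hb]
    module
  -- Cauchy-Schwarz and S ≥ 0
  have ht2 : t ^ 2 ≤ a * b := by
    have := Finset.sum_mul_sq_le_sq_mul_sq Finset.univ e d
    simpa [ht, ha, hb, dotProduct, pow_two] using this
  have htpq : t ≤ p * q := by
    have h1 : t ≤ |t| := le_abs_self t
    have h2 : |t| = Real.sqrt (t ^ 2) := (Real.sqrt_sq_eq_abs t).symm
    have h3 : Real.sqrt (t ^ 2) ≤ Real.sqrt (a * b) := Real.sqrt_le_sqrt ht2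
    have h4 : Real.sqrt (a * b) = p * q := by
      rw [← hp2, ← hq2, Real.sqrt_mul (sq_nonneg p), Real.sqrt_sq hp0, Real.sqrt_sq hq0]
    linarith [h2 ▸ h1, h4 ▸ h3]
  have hS0 : 0 ≤ α ^ 2 * β ^ 2 * p ^ 2 * q ^ 2 + 4 - 4 * α * β * t := by
    nlinarith [sq_nonneg (α * β * (p * q) - 2), mul_le_mul_of_nonneg_left htpq hc0]
  have hu2 : Real.sqrt (α ^ 2 * β ^ 2 * p ^ 2 * q ^ 2 + 4 - 4 * α * β * t) ^ 2
      = α ^ 2 * β ^ 2 * p ^ 2 * q ^ 2 + 4 - 4 * α * β * t := Real.sq_sqrt hS0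
  set u := Real.sqrt (α ^ 2 * β ^ 2 * p ^ 2 * q ^ 2 + 4 - 4 * α * β * t) with hu
  -- polynomial identity via evaluation
  have hinf : ({(1:ℝ)}ᶜ : Set ℝ).Infinite := (Set.finite_singleton 1).infinite_compl
  refine Polynomial.eq_of_infinite_eval_eq _ _ (hinf.mono ?_)
  intro y hy
  simp only [Set.mem_compl_iff, Set.mem_singleton_iff] at hy
  simp only [Set.mem_setOf_eq]
  set s := y - 1 with hs
  have hs0 : s ≠ 0 := sub_ne_zero.mpr hy
  -- RHS evaluation
  have hRHSeval : ((X - 1) ^ (k - 2) * ((X - C lp) * (X - C lm)) : ℝ[X]).eval y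
      = s ^ (k-2) * ((y - lp) * (y - lm)) := by
    simp [hs]
  rw [eval_charpoly', hRHSeval]
  -- LHS determinant
  set W : Matrix (Fin k) (Fin 2) ℝ :=
    Matrix.of (fun i j => if j = 0 then e i else d i) with hW
  set V : Matrix (Fin k) (Fin 2) ℝ :=
    Matrix.of (fun i j => if j = 0 then α*β * d i - ((α*β)^2*b) * e i else α*β * e i) with hV
  have hWV : y • (1:Matrix (Fin k) (Fin k) ℝ) - M' = s • (1 + (s⁻¹ • W) * Vᵀ) := by
    rw [hM'2]
    ext i j
    simp only [Matrix.sub_apply, Matrix.add_apply, Matrix.smul_apply, Matrix.mul_apply,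
      Matrix.one_apply, Matrix.transpose_apply, vecMulVec_apply, Fin.sum_univ_two, hW, hV,
      Matrix.of_apply, if_true, one_ne_zero, if_false, smul_eq_mul]
    norm_num
    by_cases hij : i = j
    · simp only [hij, if_pos rfl, if_true]
      field_simp
      ring
    · simp only [if_neg hij]
      field_simp
      ring
  rw [hWV, Matrix.det_smul, Matrix.det_one_add_mul_comm, Matrix.mul_smul, Fintype.card_fin]
  have hVW : Vᵀ * W = !![α*β*t - (α*β)^2*b*a, α*β*b - (α*β)^2*b*t;
      α*β*a, α*β*t] := by
    ext P R
    fin_cases P <;> fin_cases R <;>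
      simp only [Matrix.mul_apply, Matrix.transpose_apply, hV, hW, Matrix.of_apply,
        if_true, one_ne_zero, if_false, Matrix.cons_val', Matrix.cons_val_zero,
        Matrix.cons_val_one, Matrix.head_cons, Matrix.empty_val',
        Matrix.cons_val_fin_one, Fin.isValue, Fin.zero_eta, Fin.mk_one] <;>
      norm_num <;>
      simp only [ht, ha, hb, dotProduct, Finset.mul_sum, ← Finset.sum_sub_distrib] <;>
      refine Finset.sum_congr rfl fun l _ => by ring
  rw [hVW, Matrix.det_fin_two]
  simp only [Matrix.add_apply, Matrix.of_apply, Matrix.smul_apply, Matrix.one_apply_eq, Matrix.one_apply_ne,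
    Matrix.cons_val', Matrix.cons_val_zero, Matrix.cons_val_one, Matrix.head_cons,
    Matrix.empty_val', Matrix.cons_val_fin_one, Matrix.head_fin_const, smul_eq_mul,
    Ne, Fin.zero_eq_one_iff, Nat.succ_ne_self, not_false_iff, Fin.one_eq_zero_iff,
    Matrix.one_apply, if_false, one_ne_zero, zero_add]
  -- now pure algebra
  have hsk : s ^ k = s ^ (k-2) * s ^ 2 := by rw [← pow_add, Nat.sub_add_cancel hk]
  rw [hsk, mul_assoc]
  congr 1
  have hglm : (y - lp) * (y - lm) = s^2 + (2*(α*β)*t - (α*β)^2*a*b)*s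
      + (α*β)^2*t^2 - (α*β)^2*a*b := by
    rw [hlp, hlm, show y = s + 1 by rw [hs]; ring, ← hp2, ← hq2]
    linear_combination (-(α*β*p*q)^2/4) * hu2
  rw [hglm]
  field_simp
  ring
end
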